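/- Let M, M'' be n×n integral symmetric matrices, N a positive integer, and suppose there exist G ∈ GL_n(ℤ) and β ∈ Γ₀(N) with G·(M'' I)·β ≡ (M I) (mod N) (as n×2n matrices). Then γ_{M''} = ((I,0),(M'',I)) ∈ Γ_∞ · γ_M · Γ₀(N), where γ_M = ((I,0),(M,I)) and Γ_∞ is the subgroup of Sp_n(ℤ) with lower-left block zero. -/

import Mathlib

open Matrix

private lemma dc_mem_sp_lower {n : ℕ} (M : Matrix (Fin n) (Fin n) ℤ) (h : Mᵀ = M) :
    Matrix.fromBlocks 1 0 M 1 ∈ Matrix.symplecticGroup (Fin n) ℤ := by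
  rw [SymplecticGroup.mem_iff, Matrix.J, fromBlocks_transpose, fromBlocks_multiply,
    fromBlocks_multiply]
  simp [h]

private lemma dc_mem_sp_upper {n : ℕ} (B : Matrix (Fin n) (Fin n) ℤ) (h : Bᵀ = B) :
    Matrix.fromBlocks 1 B 0 1 ∈ Matrix.symplecticGroup (Fin n) ℤ := by
  rw [SymplecticGroup.mem_iff, Matrix.J, fromBlocks_transpose, fromBlocks_multiply,
    fromBlocks_multiply]
  simp [h]

private lemma dc_mem_sp_diag {n : ℕ} (P Q : Matrix (Fin n) (Fin n) ℤ)
    (h1 : P * Qᵀ = 1) (h2 : Q * Pᵀ = 1) :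
    Matrix.fromBlocks P 0 0 Q ∈ Matrix.symplecticGroup (Fin n) ℤ := by
  rw [SymplecticGroup.mem_iff, Matrix.J, fromBlocks_transpose, fromBlocks_multiply,
    fromBlocks_multiply]
  simp [h1, h2]

private lemma dc_key_alg {n : ℕ} {R : Type*} [CommRing R]
    (Mm M''m Gm Gim am bm dm : Matrix (Fin n) (Fin n) R)
    (hM''s : M''mᵀ = M''m)
    (e2 : Gim * Gm = 1)
    (e3 : Gm * M''m * am = Mm)
    (e4 : Gm * M''m * bm + Gm * dm = 1)
    (e5 : am * dmᵀ = 1)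
    (e6 : dmᵀ * bm = bmᵀ * dm) :
    (Gimᵀ * bm)ᵀ = Gimᵀ * bm ∧
      Gm * M''m - Mm * Gimᵀ + Mm * ((Gimᵀ * bm) * (Gm * M''m)) = 0 := by
  have s2 : Gim = M''m * bm + dm := by
    calc Gim = Gim * 1 := (mul_one _).symm
    _ = Gim * (Gm * M''m * bm + Gm * dm) := by rw [e4]
    _ = (Gim * Gm) * (M''m * bm) + (Gim * Gm) * dm := by noncomm_ring
    _ = M''m * bm + dm := by rw [e2, one_mul, one_mul]
  have s3 : Gimᵀ = dmᵀ + bmᵀ * M''m := by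
    rw [s2, transpose_add, transpose_mul, hM''s, add_comm]
  have hSsym : (Gimᵀ * bm)ᵀ = Gimᵀ * bm := by
    have l1 : Gimᵀ * bm = dmᵀ * bm + bmᵀ * (M''m * bm) := by rw [s3]; noncomm_ring
    calc (Gimᵀ * bm)ᵀ = (dmᵀ * bm + bmᵀ * (M''m * bm))ᵀ := by rw [l1]
    _ = bmᵀ * dm + (M''m * bm)ᵀ * bm := by
        rw [transpose_add, transpose_mul, transpose_mul, transpose_transpose,
          transpose_transpose]
    _ = dmᵀ * bm + bmᵀ * (M''m * bm) := by
        rw [← e6, transpose_mul, hM''s]; noncomm_ring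
    _ = Gimᵀ * bm := l1.symm
  refine ⟨hSsym, ?_⟩
  have s6 : am * Gimᵀ = 1 + am * (bmᵀ * M''m) := by rw [s3, mul_add, e5]
  have s7 : (Gimᵀ * bm) * Gm = bmᵀ := by
    have h : Gimᵀ * bm = bmᵀ * Gim := by
      rw [← hSsym, transpose_mul, transpose_transpose]
    rw [h, mul_assoc, e2, mul_one]
  rw [← e3]
  have t1 : Gm * M''m * am * Gimᵀ = Gm * M''m + Gm * M''m * (am * (bmᵀ * M''m)) := by
    rw [mul_assoc (Gm * M''m) am Gimᵀ, s6]; noncomm_ring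
  have t2 : Gm * M''m * am * ((Gimᵀ * bm) * (Gm * M''m)) =
      Gm * M''m * (am * (bmᵀ * M''m)) := by
    calc Gm * M''m * am * ((Gimᵀ * bm) * (Gm * M''m))
        = Gm * M''m * (am * ((Gimᵀ * bm) * Gm * M''m)) := by noncomm_ring
    _ = Gm * M''m * (am * (bmᵀ * M''m)) := by rw [s7]
  rw [t1, t2]; noncomm_ring

/-- If `G·(M'' I)·β ≡ (M I) (mod N)` for some `G ∈ GL_n(ℤ)` and `β ∈ Γ₀(N)`, then
`γ_{M''} ∈ Γ_∞ · γ_M · Γ₀(N)`. -/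
theorem double_coset_criterion (n N : ℕ) (hN : 0 < N)
    (M M'' : Matrix (Fin n) (Fin n) ℤ) (hM : M.IsSymm) (hM'' : M''.IsSymm)
    (G : Matrix (Fin n) (Fin n) ℤ) (hG : IsUnit G.det)
    (β : Matrix (Fin n ⊕ Fin n) (Fin n ⊕ Fin n) ℤ)
    (hβ : β ∈ Matrix.symplecticGroup (Fin n) ℤ)
    (hβ0 : ∀ i j, (N : ℤ) ∣ β (Sum.inr i) (Sum.inl j))
    (hcong : ∀ i j, (N : ℤ) ∣
      ((G * Matrix.fromCols M'' (1 : Matrix (Fin n) (Fin n) ℤ) * β) i j - Matrix.fromCols M (1 : Matrix (Fin n) (Fin n) ℤ) i j)) :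
    ∃ α δ : Matrix (Fin n ⊕ Fin n) (Fin n ⊕ Fin n) ℤ,
      α ∈ Matrix.symplecticGroup (Fin n) ℤ ∧
      (∀ i j, α (Sum.inr i) (Sum.inl j) = 0) ∧
      δ ∈ Matrix.symplecticGroup (Fin n) ℤ ∧
      (∀ i j, (N : ℤ) ∣ δ (Sum.inr i) (Sum.inl j)) ∧
      Matrix.fromBlocks 1 0 M'' 1 = α * Matrix.fromBlocks 1 0 M 1 * δ := by
  classical
  have hMs : Mᵀ = M := hM
  have hM''s : M''ᵀ = M'' := hM''
  obtain ⟨a, b, c, d, rfl⟩ : ∃ a b c d, β = fromBlocks a b c d :=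
    ⟨_, _, _, _, (fromBlocks_toBlocks β).symm⟩
  -- inverse of G
  set Gi : Matrix (Fin n) (Fin n) ℤ := G⁻¹ with hGidef
  have hGGi : G * Gi = 1 := mul_nonsing_inv G hG
  have hGiG : Gi * G = 1 := nonsing_inv_mul G hG
  have hGt : Gᵀ * Giᵀ = 1 := by rw [← transpose_mul, hGiG, transpose_one]
  have hGt' : Giᵀ * Gᵀ = 1 := by rw [← transpose_mul, hGGi, transpose_one]
  -- the symmetrized B
  set B' : Matrix (Fin n) (Fin n) ℤ := Giᵀ * b with hB'def
  set B : Matrix (Fin n) (Fin n) ℤ :=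
    Matrix.of (fun i j => if i ≤ j then -(B' i j) else -(B' j i)) with hBdef
  have hBsymm : Bᵀ = B := by
    ext i j
    rcases lt_trichotomy i j with h | h | h
    · simp [hBdef, transpose_apply, h.le, not_le.mpr h]
    · subst h; rfl
    · simp [hBdef, transpose_apply, h.le, not_le.mpr h]
  -- the building blocks
  set A1 : Matrix (Fin n ⊕ Fin n) (Fin n ⊕ Fin n) ℤ := fromBlocks 1 0 (-M) 1 with hA1def
  set T : Matrix (Fin n ⊕ Fin n) (Fin n ⊕ Fin n) ℤ := fromBlocks 1 B 0 1 with hTdef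
  set T' : Matrix (Fin n ⊕ Fin n) (Fin n ⊕ Fin n) ℤ := fromBlocks 1 (-B) 0 1 with hT'def
  set U : Matrix (Fin n ⊕ Fin n) (Fin n ⊕ Fin n) ℤ := fromBlocks Giᵀ 0 0 G with hUdef
  set Ui : Matrix (Fin n ⊕ Fin n) (Fin n ⊕ Fin n) ℤ := fromBlocks Gᵀ 0 0 Gi with hUidef
  set W : Matrix (Fin n ⊕ Fin n) (Fin n ⊕ Fin n) ℤ := fromBlocks 1 0 M'' 1 with hWdef
  set γM : Matrix (Fin n ⊕ Fin n) (Fin n ⊕ Fin n) ℤ := fromBlocks 1 0 M 1 with hγMdef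
  refine ⟨Ui * T', A1 * (T * (U * W)), ?_, ?_, ?_, ?_, ?_⟩
  · exact mul_mem (dc_mem_sp_diag Gᵀ Gi hGt (by rw [transpose_transpose]; exact hGiG))
      (dc_mem_sp_upper (-B) (by rw [transpose_neg, hBsymm]))
  · have hα : Ui * T' = fromBlocks Gᵀ (-(Gᵀ * B)) 0 Gi := by
      rw [hUidef, hT'def, fromBlocks_multiply]
      refine fromBlocks_inj.mpr ⟨?_, ?_, ?_, ?_⟩ <;> noncomm_ring
    intro i j
    rw [hα]
    simp
  · exact mul_mem (dc_mem_sp_lower (-M) (by rw [transpose_neg, hMs]))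
      (mul_mem (dc_mem_sp_upper B hBsymm)
        (mul_mem (dc_mem_sp_diag Giᵀ G hGt' (by rw [transpose_transpose]; exact hGGi))
          (dc_mem_sp_lower M'' hM''s)))
  · -- the divisibility condition
    set L : Matrix (Fin n) (Fin n) ℤ := G * M'' - M * Giᵀ - M * (B * (G * M'')) with hLdef
    have hδblk : A1 * (T * (U * W)) = fromBlocks (Giᵀ + B * G * M'') (B * G) L (G - M * (B * G)) := by
      rw [show A1 * (T * (U * W)) = A1 * T * U * W by simp only [Matrix.mul_assoc],
        hA1def, hTdef, hUdef, hWdef, fromBlocks_multiply, fromBlocks_multiply,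
        fromBlocks_multiply, hLdef]
      refine fromBlocks_inj.mpr ⟨?_, ?_, ?_, ?_⟩ <;> noncomm_ring
    -- mod N computation
    set φ : ℤ →+* ZMod N := Int.castRingHom (ZMod N) with hφdef
    have hLmap : L.map φ = 0 := by
      -- images
      have hcm : c.map φ = 0 := by
        ext i j
        simpa [Matrix.map_apply, fromBlocks_apply₂₁] using
          (ZMod.intCast_zmod_eq_zero_iff_dvd _ N).mpr (hβ0 i j)
      -- relations from symplecticity of β
      have hβJ := SymplecticGroup.mem_iff.mp hβ
      have hβJ' := SymplecticGroup.mem_iff'.mp hβ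
      rw [Matrix.J, fromBlocks_transpose, fromBlocks_multiply, fromBlocks_multiply] at hβJ hβJ'
      have h12 := congrArg Matrix.toBlocks₁₂ hβJ
      have h22 := congrArg Matrix.toBlocks₂₂ hβJ'
      simp only [toBlocks_fromBlocks₁₂, toBlocks_fromBlocks₂₂] at h12 h22
      have r5 : a * dᵀ - b * cᵀ = 1 := by linear_combination (norm := noncomm_ring) -h12
      have r6 : dᵀ * b = bᵀ * d := by linear_combination (norm := noncomm_ring) h22
      have e5 : a.map φ * (d.map φ)ᵀ = 1 := by
        have h := congrArg φ.mapMatrix r5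
        rw [_root_.map_sub, _root_.map_mul, _root_.map_mul, _root_.map_one] at h
        simp only [RingHom.mapMatrix_apply, Matrix.transpose_map] at h
        rw [hcm] at h
        simpa using h
      have e6 : (d.map φ)ᵀ * b.map φ = (b.map φ)ᵀ * d.map φ := by
        have h := congrArg φ.mapMatrix r6
        rw [_root_.map_mul, _root_.map_mul] at h
        simpa only [RingHom.mapMatrix_apply, Matrix.transpose_map] using h
      -- congruence relations
      have hfc : (fromCols M'' (1 : Matrix (Fin n) (Fin n) ℤ)).map φ
          = fromCols (M''.map φ) (1 : Matrix (Fin n) (Fin n) (ZMod N)) := by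
        ext i (j | j) <;>
          simp [Matrix.map_apply, fromCols, Matrix.one_apply, apply_ite φ]
      have hfcM : (fromCols M (1 : Matrix (Fin n) (Fin n) ℤ)).map φ
          = fromCols (M.map φ) (1 : Matrix (Fin n) (Fin n) (ZMod N)) := by
        ext i (j | j) <;>
          simp [Matrix.map_apply, fromCols, Matrix.one_apply, apply_ite φ]
      have hcongm : fromCols
            (G.map φ * M''.map φ * a.map φ + G.map φ * c.map φ)
            (G.map φ * M''.map φ * b.map φ + G.map φ * d.map φ)
          = fromCols (M.map φ) 1 := by
        have h0 : (G * fromCols M'' (1 : Matrix (Fin n) (Fin n) ℤ) *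
            fromBlocks a b c d).map φ = (fromCols M (1 : Matrix (Fin n) (Fin n) ℤ)).map φ := by
          ext i j
          have h1 := (ZMod.intCast_zmod_eq_zero_iff_dvd _ N).mpr (hcong i j)
          push_cast at h1
          simpa [Matrix.map_apply, sub_eq_zero] using h1
        rw [Matrix.map_mul, Matrix.map_mul, hfc, hfcM, fromBlocks_map,
          mul_fromCols, fromCols_mul_fromBlocks] at h0
        simpa [Matrix.mul_one] using h0
      have e3 : G.map φ * M''.map φ * a.map φ = M.map φ := by
        have h' : ∀ i j, (fromCols
            (G.map φ * M''.map φ * a.map φ + G.map φ * c.map φ)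
            (G.map φ * M''.map φ * b.map φ + G.map φ * d.map φ)) i (Sum.inl j)
            = (fromCols (M.map φ) (1 : Matrix (Fin n) (Fin n) (ZMod N))) i (Sum.inl j) := by
          intro i j; rw [hcongm]
        have h'' : G.map φ * M''.map φ * a.map φ + G.map φ * c.map φ = M.map φ := by
          ext i j; simpa [fromCols] using h' i j
        rw [hcm] at h''
        simpa using h''
      have e4 : G.map φ * M''.map φ * b.map φ + G.map φ * d.map φ = 1 := by
        have h' : ∀ i j, (fromCols
            (G.map φ * M''.map φ * a.map φ + G.map φ * c.map φ)
            (G.map φ * M''.map φ * b.map φ + G.map φ * d.map φ)) i (Sum.inr j)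
            = (fromCols (M.map φ) (1 : Matrix (Fin n) (Fin n) (ZMod N))) i (Sum.inr j) := by
          intro i j; rw [hcongm]
        ext i j; simpa [fromCols] using h' i j
      have e2 : Gi.map φ * G.map φ = 1 := by
        rw [← Matrix.map_mul, hGiG, Matrix.map_one φ φ.map_zero φ.map_one]
      have hM''sm : (M''.map φ)ᵀ = M''.map φ := by
        rw [← Matrix.transpose_map, hM''s]
      obtain ⟨hSsym, hfinal⟩ := dc_key_alg (M.map φ) (M''.map φ) (G.map φ) (Gi.map φ)
        (a.map φ) (b.map φ) (d.map φ) hM''sm e2 e3 e4 e5 e6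
      -- the image of B is -(Giᵀ b)
      have hBm : B.map φ = -((Gi.map φ)ᵀ * b.map φ) := by
        have hB'm : B'.map ⇑φ = (Gi.map φ)ᵀ * b.map φ := by
          rw [hB'def, Matrix.map_mul, Matrix.transpose_map]
        have hB'e : ∀ i j, φ (B' i j) = ((Gi.map φ)ᵀ * b.map φ) i j := by
          intro i j; rw [← hB'm]; rfl
        ext i j
        rw [Matrix.map_apply, hBdef]
        simp only [Matrix.of_apply, Matrix.neg_apply]
        split_ifs with h
        · rw [_root_.map_neg, hB'e]
        · rw [_root_.map_neg, hB'e,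
            show ((Gi.map φ)ᵀ * b.map φ) j i = ((Gi.map φ)ᵀ * b.map φ)ᵀ i j from rfl, hSsym]
      have hLm : L.map ⇑φ = G.map φ * M''.map φ - M.map φ * (Gi.map φ)ᵀ
          - M.map φ * (B.map φ * (G.map φ * M''.map φ)) := by
        rw [hLdef, show (G * M'' - M * Giᵀ - M * (B * (G * M''))).map ⇑φ
          = φ.mapMatrix (G * M'' - M * Giᵀ - M * (B * (G * M''))) from rfl]
        rw [_root_.map_sub, _root_.map_sub, _root_.map_mul, _root_.map_mul, _root_.map_mul, _root_.map_mul, _root_.map_mul]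
        simp only [RingHom.mapMatrix_apply, Matrix.transpose_map]
      rw [hLm, hBm]
      linear_combination (norm := noncomm_ring) hfinal
    intro i j
    have hL : (A1 * (T * (U * W))) (Sum.inr i) (Sum.inl j) = L i j := by rw [hδblk]; rfl
    rw [hL]
    have hij : L.map ⇑φ i j = (0 : Matrix (Fin n) (Fin n) (ZMod N)) i j := by rw [hLmap]
    exact (ZMod.intCast_zmod_eq_zero_iff_dvd _ N).mp (by simpa [Matrix.map_apply] using hij)
  · -- the product identity
    have k1 : γM * A1 = 1 := by
      rw [hγMdef, hA1def, fromBlocks_multiply]; simp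
    have k2 : T' * T = 1 := by
      rw [hT'def, hTdef, fromBlocks_multiply]; simp
    have k3 : Ui * U = 1 := by
      rw [hUidef, hUdef, fromBlocks_multiply]
      simp [hGt, hGiG, ← fromBlocks_one]
    symm
    calc (Ui * T') * γM * (A1 * (T * (U * W)))
        = Ui * ((T' * (γM * A1)) * (T * (U * W))) := by simp only [Matrix.mul_assoc]
    _ = Ui * (T' * (T * (U * W))) := by rw [k1, Matrix.mul_one]
    _ = Ui * ((T' * T) * (U * W)) := by simp only [Matrix.mul_assoc]
    _ = (Ui * U) * W := by rw [k2, Matrix.one_mul]; simp only [Matrix.mul_assoc]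
    _ = W := by rw [k3, Matrix.one_mul]
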